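/- Let T(x) = x/(1 − e^{−x}). Then the formal power series identity v²·T''(v) = (T(v) − v·T'(v))·(2T(v) − v − 2) holds. -/

import Mathlib

open PowerSeries

/-- The formal derivative on `ℚ⟦X⟧`. -/
noncomputable def der (f : PowerSeries ℚ) : PowerSeries ℚ := PowerSeries.derivative ℚ f

lemma der_mul (f g : PowerSeries ℚ) : der (f * g) = f * der g + g * der f := by
  simpa [der, smul_eq_mul] using Derivation.leibniz (PowerSeries.derivative ℚ) f g

lemma der_rescale_exp :
    der (PowerSeries.rescale (-1 : ℚ) (PowerSeries.exp ℚ)) =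
      -(PowerSeries.rescale (-1 : ℚ) (PowerSeries.exp ℚ)) := by
  ext n
  rw [der, PowerSeries.coeff_derivative, PowerSeries.coeff_rescale, PowerSeries.coeff_exp,
    map_neg, PowerSeries.coeff_rescale, PowerSeries.coeff_exp]
  simp only [eq_ratCast, Rat.cast_div, Rat.cast_one, Rat.cast_natCast]
  rw [Nat.factorial_succ, pow_succ]
  push_cast
  have h1 : ((n : ℚ) + 1) ≠ 0 := by positivity
  have h2 : ((n.factorial : ℚ)) ≠ 0 := by exact_mod_cast n.factorial_ne_zero
  field_simp

/-- With `T(x) = x/(1 - e^{-x})` the Todd series (characterized by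
`T · (1 - e^{-X}) = X`), one has `v²·T''(v) = (T(v) - v·T'(v))·(2T(v) - v - 2)`. -/
theorem stmt_7 (T : PowerSeries ℚ)
    (hT : T * (1 - PowerSeries.rescale (-1 : ℚ) (PowerSeries.exp ℚ)) = PowerSeries.X) :
    PowerSeries.X ^ 2 * der (der T) =
      (T - PowerSeries.X * der T) * (2 * T - PowerSeries.X - 2) := by
  set E : PowerSeries ℚ := 1 - PowerSeries.rescale (-1 : ℚ) (PowerSeries.exp ℚ) with hE
  have hdE : der E = 1 - E := by
    rw [hE]
    have : der (1 - PowerSeries.rescale (-1 : ℚ) (PowerSeries.exp ℚ))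
        = der 1 - der (PowerSeries.rescale (-1 : ℚ) (PowerSeries.exp ℚ)) := by
      simp [der, map_sub]
    rw [this, der_rescale_exp]
    simp [der]
  have hEne : E ≠ 0 := by
    intro h
    have := congrArg (PowerSeries.coeff 1) h
    rw [hE] at this
    simp [PowerSeries.coeff_rescale, PowerSeries.coeff_exp] at this
  -- first derivative of hT
  have h2 : der T * E + T * (1 - E) = 1 := by
    have := congrArg der hT
    rw [der_mul, hdE] at this
    have hderX : der (PowerSeries.X : PowerSeries ℚ) = 1 := by
      simp [der]
    rw [hderX] at this
    linear_combination this
  -- second derivative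
  have h3 : der (der T) * E + 2 * der T * (1 - E) + T * (E - 1) = 0 := by
    have := congrArg der h2
    have e1 : der (der T * E + T * (1 - E)) =
        (der T * der E + E * der (der T)) + (T * der (1 - E) + (1 - E) * der T) := by
      rw [der, map_add, ← der, ← der, der_mul, der_mul]
    have e2 : der ((1 : PowerSeries ℚ) - E) = E - 1 := by
      have : der ((1 : PowerSeries ℚ) - E) = der 1 - der E := by simp [der, map_sub]
      rw [this, hdE]
      simp [der]
    have e3 : der (1 : PowerSeries ℚ) = 0 := by simp [der]
    rw [e1, e2, e3, hdE] at this
    linear_combination this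
  have key : E ^ 2 * (PowerSeries.X ^ 2 * der (der T)) =
      E ^ 2 * ((T - PowerSeries.X * der T) * (2 * T - PowerSeries.X - 2)) := by
    linear_combination (PowerSeries.X ^ 2 * E) * h3
      + (PowerSeries.X * E * (2 * T - PowerSeries.X - 2)
          - 2 * PowerSeries.X ^ 2 * (1 - E)) * h2
      + (- PowerSeries.X ^ 2 * (1 - E)
          - (E + PowerSeries.X - PowerSeries.X * E) * (2 * T - PowerSeries.X - 2)) * hT
  exact mul_left_cancel₀ (pow_ne_zero 2 hEne) key
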